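/- Let G be a graph with no infinite clique. Then the neighborhood lattice N̂(G) contains an infinite chain if and only if G contains an induced subgraph isomorphic to G0 or to G1. -/

import Mathlib

set_option autoImplicit false

/-- The bipartite graph `G0` on `A ∪ B` (`A, B` the two copies of `ℕ`),
with an edge `{a_i, b_j}` iff `i ≠ j`. -/
def G0 : SimpleGraph (ℕ ⊕ ℕ) :=
  SimpleGraph.fromRel (fun u v => ∃ i j : ℕ, u = Sum.inl i ∧ v = Sum.inr j ∧ i ≠ j)

/-- The bipartite graph `G1` (half complete bipartite graph),
with an edge `{a_i, b_j}` iff `i < j`. -/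
def G1 : SimpleGraph (ℕ ⊕ ℕ) :=
  SimpleGraph.fromRel (fun u v => ∃ i j : ℕ, u = Sum.inl i ∧ v = Sum.inr j ∧ i < j)

/-- The neighborhood lattice of a graph: all intersections of neighborhoods
(the whole vertex set being the empty intersection), ordered by inclusion. -/
def nhdLattice {V : Type*} (G : SimpleGraph V) : Set (Set V) :=
  {X | ∃ S : Set V, X = ⋂ x ∈ S, G.neighborSet x}


private lemma infinite_of_iUnion {K : Type*} [Finite K] {s : K → Set ℕ} {T : Set ℕ}
    (hT : T.Infinite) (hsub : T ⊆ ⋃ k, s k) : ∃ k, (s k).Infinite := by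
  by_contra h
  push_neg at h
  try simp only [Set.not_infinite] at h
  exact hT ((Set.finite_iUnion h).subset hsub)

private lemma ramsey_pairs {K : Type*} [Finite K] (c : ℕ → ℕ → K) :
    ∃ g : ℕ → ℕ, StrictMono g ∧ ∃ k : K, ∀ i j, i < j → c (g i) (g j) = k := by
  have step : ∀ S : Set ℕ, S.Infinite →
      ∃ x, x ∈ S ∧ ∃ T, T ⊆ S ∧ T.Infinite ∧ (∀ y ∈ T, x < y) ∧ ∃ k, ∀ y ∈ T, c x y = k := by
    intro S hS
    obtain ⟨x, hx⟩ := hS.nonempty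
    have hT0 : (S \ Set.Iic x).Infinite := hS.diff (Set.finite_Iic x)
    have hcover : (S \ Set.Iic x) ⊆ ⋃ k : K, {y | y ∈ S \ Set.Iic x ∧ c x y = k} := fun y hy =>
      Set.mem_iUnion.2 ⟨c x y, hy, rfl⟩
    obtain ⟨k, hk⟩ := infinite_of_iUnion hT0 hcover
    refine ⟨x, hx, _, fun y hy => hy.1.1, hk, fun y hy => lt_of_not_ge fun h => hy.1.2 h,
      k, fun y hy => hy.2⟩
  choose! xf hxf Tf hTsub hTinf hTlt kf hkf using step
  let seq : ℕ → {S : Set ℕ // S.Infinite} := fun n =>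
    Nat.rec ⟨Set.univ, Set.infinite_univ⟩ (fun _ p => ⟨Tf p.1, hTinf p.1 p.2⟩) n
  have hseqs : ∀ n, (seq (n+1)).1 = Tf (seq n).1 := fun n => rfl
  set X : ℕ → ℕ := fun n => xf (seq n).1 with hX
  have hXmem : ∀ n, X n ∈ (seq n).1 := fun n => hxf _ (seq n).2
  have hsub' : ∀ n, (seq (n+1)).1 ⊆ (seq n).1 := fun n => hTsub _ (seq n).2
  have hmono : ∀ n m, n ≤ m → (seq m).1 ⊆ (seq n).1 := by
    intro n m h
    induction h with
    | refl => exact subset_rfl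
    | step h ih => exact fun y hy => ih ((hsub' _) hy)
  have hlt : ∀ n m, n < m → X n < X m := fun n m h =>
    hTlt _ (seq n).2 _ (hmono (n+1) m h (hXmem m))
  let kf' : ℕ → K := fun n => kf (seq n).1 (seq n).2
  have hcol : ∀ n m, n < m → c (X n) (X m) = kf' n := fun n m h =>
    hkf _ (seq n).2 _ (hmono (n+1) m h (hXmem m))
  have hcov2 : (Set.univ : Set ℕ) ⊆ ⋃ k : K, {n | kf' n = k} := fun n _ =>
    Set.mem_iUnion.2 ⟨_, rfl⟩
  obtain ⟨k, hk⟩ := infinite_of_iUnion Set.infinite_univ hcov2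
  refine ⟨X ∘ Nat.nth (fun n => kf' n = k),
    fun a b hab => hlt _ _ (Nat.nth_strictMono hk hab), k, fun i j hij => ?_⟩
  have := hcol _ _ (Nat.nth_strictMono hk hij)
  simpa [this] using Nat.nth_mem_of_infinite hk i

lemma G0_adj_inl_inr (i j : ℕ) : G0.Adj (Sum.inl i) (Sum.inr j) ↔ i ≠ j := by
  simp [G0, SimpleGraph.fromRel_adj]

lemma G0_adj_inl_inl (i j : ℕ) : ¬ G0.Adj (Sum.inl i) (Sum.inl j) := by
  simp [G0, SimpleGraph.fromRel_adj]

lemma G0_adj_inr_inr (i j : ℕ) : ¬ G0.Adj (Sum.inr i) (Sum.inr j) := by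
  simp [G0, SimpleGraph.fromRel_adj]

lemma G1_adj_inl_inr (i j : ℕ) : G1.Adj (Sum.inl i) (Sum.inr j) ↔ i < j := by
  simp [G1, SimpleGraph.fromRel_adj]

lemma G1_adj_inl_inl (i j : ℕ) : ¬ G1.Adj (Sum.inl i) (Sum.inl j) := by
  simp [G1, SimpleGraph.fromRel_adj]

lemma G1_adj_inr_inr (i j : ℕ) : ¬ G1.Adj (Sum.inr i) (Sum.inr j) := by
  simp [G1, SimpleGraph.fromRel_adj]

/-- From a pair of sequences forming a "half-graph with non-edge diagonal" pattern,
produce an infinite chain in the neighborhood lattice. -/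
lemma chain_of_seqs {V : Type*} (G : SimpleGraph V) (a b : ℕ → V)
    (hu : ∀ i j, i < j → G.Adj (a i) (b j)) (hd : ∀ i, ¬ G.Adj (a i) (b i)) :
    ∃ C : Set (Set V), C ⊆ nhdLattice G ∧ C.Infinite ∧ IsChain (· ⊆ ·) C := by
  set X : ℕ → Set V := fun n => ⋂ i ∈ Set.Iic n, G.neighborSet (a i) with hXdef
  have hmem : ∀ n, X n ∈ nhdLattice G := by
    intro n
    exact ⟨a '' Set.Iic n, by rw [Set.biInter_image]⟩
  have hanti : ∀ n m, n ≤ m → X m ⊆ X n := by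
    intro n m h
    exact Set.biInter_subset_biInter_left fun i (hi : i ≤ n) => hi.trans h
  have hw : ∀ n, b (n+1) ∈ X n := by
    intro n
    simp only [hXdef, Set.mem_iInter, SimpleGraph.mem_neighborSet]
    exact fun i hi => hu i (n+1) (Nat.lt_succ_of_le hi)
  have hw' : ∀ n m, n < m → b (n+1) ∉ X m := by
    intro n m h hmem'
    have : b (n+1) ∈ G.neighborSet (a (n+1)) := by
      have := (Set.biInter_subset_of_mem (show n+1 ∈ Set.Iic m from h)) hmem'
      exact this
    exact hd (n+1) this
  have hinj : Function.Injective X := by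
    intro n m hnm
    by_contra hne
    rcases Nat.lt_or_ge n m with h | h
    · exact hw' n m h (hnm ▸ hw n)
    · exact hw' m n (lt_of_le_of_ne h (Ne.symm hne)) (hnm ▸ hw m)
  refine ⟨Set.range X, ?_, Set.infinite_range_of_injective hinj, ?_⟩
  · rintro _ ⟨n, rfl⟩; exact hmem n
  · rintro _ ⟨n, rfl⟩ _ ⟨m, rfl⟩ _
    rcases le_total n m with h | h
    · exact Or.inr (hanti n m h)
    · exact Or.inl (hanti m n h)

lemma key_lemma {V : Type*} (G : SimpleGraph V)
    (hclique : ¬ ∃ S : Set V, S.Infinite ∧ G.IsClique S) (a b : ℕ → V)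
    (hd : ∀ n, ¬ G.Adj (a n) (b n)) (hu : ∀ n m, n < m → G.Adj (a n) (b m)) :
    Nonempty (G0 ↪g G) ∨ Nonempty (G1 ↪g G) := by
  classical
  have hbne : ∀ n m, n < m → b n ≠ b m := by
    intro n m h he
    exact hd n (by rw [he]; exact hu n m h)
  have hane : ∀ n m, n < m → a n ≠ a m := by
    intro n m h he
    exact hd m (by rw [← he]; exact hu n m h)
  let c : ℕ → ℕ → Bool × Bool × Bool × Bool := fun n m =>
    (decide (G.Adj (a n) (a m)), decide (G.Adj (b n) (b m)),
     decide (G.Adj (a m) (b n)), decide (a m = b n))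
  obtain ⟨g, hg, ⟨k1, k2, k3, k4⟩, hk⟩ := ramsey_pairs c
  have h1 : ∀ i j, i < j → (G.Adj (a (g i)) (a (g j)) ↔ k1 = true) := by
    intro i j hij
    have := congrArg Prod.fst (hk i j hij)
    simp only [c] at this
    rw [← this, decide_eq_true_iff]
  have h2 : ∀ i j, i < j → (G.Adj (b (g i)) (b (g j)) ↔ k2 = true) := by
    intro i j hij
    have := congrArg (fun p => p.2.1) (hk i j hij)
    simp only [c] at this
    rw [← this, decide_eq_true_iff]
  have h3 : ∀ i j, i < j → (G.Adj (a (g j)) (b (g i)) ↔ k3 = true) := by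
    intro i j hij
    have := congrArg (fun p => p.2.2.1) (hk i j hij)
    simp only [c] at this
    rw [← this, decide_eq_true_iff]
  have h4 : ∀ i j, i < j → (a (g j) = b (g i) ↔ k4 = true) := by
    intro i j hij
    have := congrArg (fun p => p.2.2.2) (hk i j hij)
    simp only [c] at this
    rw [← this, decide_eq_true_iff]
  -- k1 is false: otherwise the a's would form an infinite clique
  have hk1 : k1 = false := by
    by_contra h
    rw [Bool.not_eq_false] at h
    refine hclique ⟨Set.range (fun i => a (g i)), Set.infinite_range_of_injective ?_, ?_⟩
    · intro i j he
      by_contra hne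
      rcases Nat.lt_or_ge i j with h' | h'
      · exact hane (g i) (g j) (hg h') he
      · exact hane (g j) (g i) (hg (lt_of_le_of_ne h' (Ne.symm hne))) he.symm
    · rintro _ ⟨i, rfl⟩ _ ⟨j, rfl⟩ hne
      rcases Nat.lt_or_ge i j with h' | h'
      · exact (h1 i j h').2 h
      · have hij : j < i := lt_of_le_of_ne h' fun he => hne (by rw [he])
        exact ((h1 j i hij).2 h).symm
  have hk2 : k2 = false := by
    by_contra h
    rw [Bool.not_eq_false] at h
    refine hclique ⟨Set.range (fun i => b (g i)), Set.infinite_range_of_injective ?_, ?_⟩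
    · intro i j he
      by_contra hne
      rcases Nat.lt_or_ge i j with h' | h'
      · exact hbne (g i) (g j) (hg h') he
      · exact hbne (g j) (g i) (hg (lt_of_le_of_ne h' (Ne.symm hne))) he.symm
    · rintro _ ⟨i, rfl⟩ _ ⟨j, rfl⟩ hne
      rcases Nat.lt_or_ge i j with h' | h'
      · exact (h2 i j h').2 h
      · have hij : j < i := lt_of_le_of_ne h' fun he => hne (by rw [he])
        exact ((h2 j i hij).2 h).symm
  have hk4 : k4 = false := by
    by_contra h
    rw [Bool.not_eq_false] at h
    have e1 : a (g 2) = b (g 0) := (h4 0 2 (by norm_num)).2 h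
    have e2 : a (g 2) = b (g 1) := (h4 1 2 (by norm_num)).2 h
    exact hbne (g 0) (g 1) (hg Nat.zero_lt_one) (e1 ▸ e2)
  -- diagonal distinctness
  have hdiagne : ∀ i, a (g i) ≠ b (g i) := by
    intro i he
    have hadj : G.Adj (a (g i)) (b (g (i+1))) := hu _ _ (hg (Nat.lt_succ_self i))
    rw [he] at hadj
    have := (h2 i (i+1) (Nat.lt_succ_self i)).1 hadj
    rw [hk2] at this; exact Bool.false_ne_true this
  -- collected adjacency facts
  have hAA : ∀ i j : ℕ, ¬ G.Adj (a (g i)) (a (g j)) := by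
    intro i j hadj
    rcases Nat.lt_trichotomy i j with h' | h' | h'
    · have := (h1 i j h').1 hadj; rw [hk1] at this; exact Bool.false_ne_true this
    · exact G.irrefl (h' ▸ hadj)
    · have := (h1 j i h').1 hadj.symm; rw [hk1] at this; exact Bool.false_ne_true this
  have hBB : ∀ i j : ℕ, ¬ G.Adj (b (g i)) (b (g j)) := by
    intro i j hadj
    rcases Nat.lt_trichotomy i j with h' | h' | h'
    · have := (h2 i j h').1 hadj; rw [hk2] at this; exact Bool.false_ne_true this
    · exact G.irrefl (h' ▸ hadj)
    · have := (h2 j i h').1 hadj.symm; rw [hk2] at this; exact Bool.false_ne_true this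
  have hABlt : ∀ i j : ℕ, i < j → G.Adj (a (g i)) (b (g j)) := fun i j h => hu _ _ (hg h)
  have hABgt : ∀ i j : ℕ, j < i → (G.Adj (a (g i)) (b (g j)) ↔ k3 = true) := fun i j h => h3 j i h
  have hABd : ∀ i : ℕ, ¬ G.Adj (a (g i)) (b (g i)) := fun i => hd (g i)
  have hABne : ∀ i j : ℕ, a (g i) ≠ b (g j) := by
    intro i j he
    rcases Nat.lt_trichotomy i j with h' | h' | h'
    · exact (hABlt i j h').ne he
    · exact hdiagne i (h' ▸ he)
    · have := (h4 j i h').1 he; rw [hk4] at this; exact Bool.false_ne_true this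
  have hinj : Function.Injective (Sum.elim (fun i => a (g i)) (fun j => b (g j)) : ℕ ⊕ ℕ → V) := by
    rintro (i | i) (j | j) he <;> simp only [Sum.elim_inl, Sum.elim_inr] at he
    · by_contra hne
      have hne' : i ≠ j := fun h => hne (by rw [h])
      rcases Nat.lt_or_ge i j with h' | h'
      · exact hane (g i) (g j) (hg h') he
      · exact hane (g j) (g i) (hg (lt_of_le_of_ne h' (Ne.symm hne'))) he.symm
    · exact absurd he (hABne i j)
    · exact absurd he.symm (hABne j i)
    · by_contra hne
      have hne' : i ≠ j := fun h => hne (by rw [h])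
      rcases Nat.lt_or_ge i j with h' | h'
      · exact hbne (g i) (g j) (hg h') he
      · exact hbne (g j) (g i) (hg (lt_of_le_of_ne h' (Ne.symm hne'))) he.symm
  rcases Bool.eq_false_or_eq_true k3 with hk3 | hk3
  · -- k3 = true : induced copy of G0
    refine Or.inl ⟨⟨⟨Sum.elim (fun i => a (g i)) (fun j => b (g j)), hinj⟩, ?_⟩⟩
    rintro (i | i) (j | j) <;>
      simp only [Function.Embedding.coeFn_mk, Sum.elim_inl, Sum.elim_inr]
    · exact iff_of_false (hAA i j) (G0_adj_inl_inl i j)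
    · rw [G0_adj_inl_inr]
      constructor
      · intro hadj he
        exact hABd j (he ▸ hadj)
      · intro hne
        rcases Nat.lt_or_ge i j with h' | h'
        · exact hABlt i j h'
        · exact (hABgt i j (lt_of_le_of_ne h' (Ne.symm hne))).2 hk3
    · rw [G0.adj_comm, G0_adj_inl_inr, G.adj_comm]
      constructor
      · intro hadj he
        exact hABd i (he ▸ hadj)
      · intro hne
        rcases Nat.lt_or_ge j i with h' | h'
        · exact hABlt j i h'
        · exact (hABgt j i (lt_of_le_of_ne h' (Ne.symm hne))).2 hk3
    · exact iff_of_false (hBB i j) (G0_adj_inr_inr i j)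
  · -- k3 = false : induced copy of G1
    refine Or.inr ⟨⟨⟨Sum.elim (fun i => a (g i)) (fun j => b (g j)), hinj⟩, ?_⟩⟩
    rintro (i | i) (j | j) <;>
      simp only [Function.Embedding.coeFn_mk, Sum.elim_inl, Sum.elim_inr]
    · exact iff_of_false (hAA i j) (G1_adj_inl_inl i j)
    · rw [G1_adj_inl_inr]
      constructor
      · intro hadj
        rcases Nat.lt_trichotomy i j with h' | h' | h'
        · exact h'
        · exact absurd (h' ▸ hadj) (hABd j)
        · rw [hABgt i j h', hk3] at hadj; exact absurd hadj Bool.false_ne_true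
      · exact hABlt i j
    · rw [G1.adj_comm, G1_adj_inl_inr, G.adj_comm]
      constructor
      · intro hadj
        rcases Nat.lt_trichotomy j i with h' | h' | h'
        · exact h'
        · exact absurd (h' ▸ hadj) (hABd i)
        · rw [hABgt j i h', hk3] at hadj; exact absurd hadj Bool.false_ne_true
      · exact hABlt j i
    · exact iff_of_false (hBB i j) (G1_adj_inr_inr i j)

/-- From a strictly increasing or strictly decreasing sequence in the neighborhood lattice,
extract the half-graph pattern. -/
lemma seqs_of_chain {V : Type*} (G : SimpleGraph V) (C : Set (Set V))
    (hsub : C ⊆ nhdLattice G) (hinf : C.Infinite) (hchain : IsChain (· ⊆ ·) C) :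
    ∃ a b : ℕ → V, (∀ n, ¬ G.Adj (a n) (b n)) ∧ (∀ n m, n < m → G.Adj (a n) (b m)) := by
  classical
  let e := hinf.natEmbedding
  let f0 : ℕ → Set V := fun n => (e n : Set V)
  have hf0inj : Function.Injective f0 := fun n m h => e.injective (Subtype.ext h)
  have hf0C : ∀ n, f0 n ∈ C := fun n => (e n).2
  haveI : IsTrans (Set V) (fun x1 x2 => x1 < x2) := ⟨fun _ _ _ => lt_trans⟩
  obtain ⟨g, hcase⟩ := exists_increasing_or_nonincreasing_subseq (· < ·) f0
  set Y : ℕ → Set V := fun n => f0 (g n) with hY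
  have hYC : ∀ n, Y n ∈ C := fun n => hf0C (g n)
  have hYinj : Function.Injective Y := fun n m h => g.injective (hf0inj h)
  choose S hS using fun n => hsub (hYC n)
  rcases hcase with hup | hnon
  · -- strictly increasing
    have hlt : ∀ m n, m < n → Y m ⊂ Y n := fun m n h => hup m n h
    choose bb hb1 hb2 using fun n => Set.exists_of_ssubset (hlt n (n+1) (Nat.lt_succ_self n))
    have hbS : ∀ n, ∃ x ∈ S n, bb n ∉ G.neighborSet x := by
      intro n
      by_contra h
      push_neg at h
      exact hb2 n (by rw [hS n]; exact Set.mem_iInter₂.2 fun x hx => h x hx)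
    choose aa ha1 ha2 using hbS
    refine ⟨bb, aa, ?_, ?_⟩
    · intro n h
      exact ha2 n (h.symm : G.Adj (aa n) (bb n))
    · intro n m h
      have hYle : Y (n+1) ⊆ Y m := by
        rcases eq_or_lt_of_le (Nat.succ_le_of_lt h) with he | h'
        · rw [← he]
        · exact (hlt _ _ h').1
      have : bb n ∈ G.neighborSet (aa m) := by
        have hm : bb n ∈ Y m := hYle (hb1 n)
        rw [hS m] at hm
        exact Set.mem_iInter₂.1 hm (aa m) (ha1 m)
      exact this.symm
  · -- nonincreasing, hence strictly decreasing
    have hlt : ∀ m n, m < n → Y n ⊂ Y m := by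
      intro m n h
      have hne : Y n ≠ Y m := fun he => (Nat.lt_irrefl m) (by rw [hYinj he] at h; exact h)
      rcases hchain (hYC n) (hYC m) hne with h' | h'
      · exact lt_of_le_of_ne h' hne
      · exact absurd (lt_of_le_of_ne h' hne.symm) (hnon m n h)
    choose bb hb1 hb2 using fun n => Set.exists_of_ssubset (hlt n (n+1) (Nat.lt_succ_self n))
    have hbS : ∀ n, ∃ x ∈ S (n+1), bb n ∉ G.neighborSet x := by
      intro n
      by_contra h
      push_neg at h
      exact hb2 n (by rw [hS (n+1)]; exact Set.mem_iInter₂.2 fun x hx => h x hx)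
    choose aa ha1 ha2 using hbS
    refine ⟨fun n => aa n, fun n => bb n, ?_, ?_⟩
    · intro n h
      exact ha2 n h
    · intro n m h
      have hYle : Y m ⊆ Y (n+1) := by
        rcases eq_or_lt_of_le (Nat.succ_le_of_lt h) with he | h'
        · rw [← he]
        · exact (hlt _ _ h').1
      have : bb m ∈ G.neighborSet (aa n) := by
        have hm : bb m ∈ Y (n+1) := hYle (hb1 m)
        rw [hS (n+1)] at hm
        exact Set.mem_iInter₂.1 hm (aa n) (ha1 n)
      exact this

/-- For a graph without infinite cliques, the neighborhood lattice contains an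
infinite chain iff the graph contains an induced copy of `G0` or of `G1`. -/
theorem nhdLattice_infinite_chain_iff {V : Type*} (G : SimpleGraph V)
    (hclique : ¬ ∃ S : Set V, S.Infinite ∧ G.IsClique S) :
    (∃ C : Set (Set V), C ⊆ nhdLattice G ∧ C.Infinite ∧ IsChain (· ⊆ ·) C) ↔
      (Nonempty (G0 ↪g G) ∨ Nonempty (G1 ↪g G)) := by
  constructor
  · rintro ⟨C, h1, h2, h3⟩
    obtain ⟨a, b, hd, hu⟩ := seqs_of_chain G C h1 h2 h3
    exact key_lemma G hclique a b hd hu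
  · rintro (h | h)
    · obtain ⟨f⟩ := h
      exact chain_of_seqs G (fun i => f (Sum.inl i)) (fun j => f (Sum.inr j))
        (fun i j h => f.map_rel_iff.2 ((G0_adj_inl_inr i j).2 h.ne))
        (fun i h => (G0_adj_inl_inr i i).1 (f.map_rel_iff.1 h) rfl)
    · obtain ⟨f⟩ := h
      exact chain_of_seqs G (fun i => f (Sum.inl i)) (fun j => f (Sum.inr j))
        (fun i j h => f.map_rel_iff.2 ((G1_adj_inl_inr i j).2 h))
        (fun i h => Nat.lt_irrefl i ((G1_adj_inl_inr i i).1 (f.map_rel_iff.1 h)))
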